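/- Work in A = ℂ[y₁,…,yₙ,x₁,…,x_p] with polynomials f₂,…,f_s ∈ A containing y_i² − y_i for every i, and suppose the system f₂ = 0,…,f_s = 0 is subset closed. Then for every d ∈ {0,1}ⁿ with d ∉ B, the squarefree monomial y_d = ∏_{i : d_i = 1} y_i lies in the ideal ⟨f₂,…,f_s⟩ of A. -/

import Mathlib

open MvPolynomial

/-- The `y`-coordinate indicator condition: the vector `χ_d ∈ {0,1}ⁿ` (with
support `d`) arises as the `y`-coordinates of a common zero of the `f j`. -/
def InB (n p s : ℕ) (f : Fin s → MvPolynomial (Fin n ⊕ Fin p) ℂ)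
    (d : Finset (Fin n)) : Prop :=
  ∃ z : (Fin n ⊕ Fin p) → ℂ, (∀ j : Fin s, eval z (f j) = 0) ∧
    ∀ i : Fin n, z (Sum.inl i) = if i ∈ d then 1 else 0

/-- The system `f₂ = 0,…,f_s = 0` is subset closed: the all-zero `y`-vector is
attained, and if `χ_I` is attained as the `y`-coordinates of a common zero
then so is `χ_J` for every `J ⊆ I`. -/
def SubsetClosed (n p s : ℕ) (f : Fin s → MvPolynomial (Fin n ⊕ Fin p) ℂ) : Prop :=
  (∃ z : (Fin n ⊕ Fin p) → ℂ, (∀ j : Fin s, eval z (f j) = 0) ∧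
      ∀ i : Fin n, z (Sum.inl i) = 0) ∧
  ∀ I : Finset (Fin n), InB n p s f I → ∀ J ⊆ I, InB n p s f J

/-- If `f₂,…,f_s` contain all the `y_i² − y_i` and the system
is subset closed, then for every `d ∈ {0,1}ⁿ` not in `B`, the squarefree
monomial `y_d = ∏_{i : d_i = 1} y_i` lies in the ideal `⟨f₂,…,f_s⟩`. -/
theorem stmt4 (n p s : ℕ) (f : Fin s → MvPolynomial (Fin n ⊕ Fin p) ℂ)
    (hind : ∀ i : Fin n, ∃ j : Fin s,
      f j = (X (Sum.inl i)) ^ 2 - X (Sum.inl i))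
    (hclosed : SubsetClosed n p s f) :
    ∀ d : Finset (Fin n), ¬ InB n p s f d →
      (∏ i ∈ d, X (Sum.inl i) : MvPolynomial (Fin n ⊕ Fin p) ℂ) ∈
        Ideal.span (Set.range f) := by
  intro d hd
  set I : Ideal (MvPolynomial (Fin n ⊕ Fin p) ℂ) := Ideal.span (Set.range f) with hI
  set yd : MvPolynomial (Fin n ⊕ Fin p) ℂ := ∏ i ∈ d, X (Sum.inl i) with hyd
  -- Step 1: y_d vanishes on the zero locus of I
  have hrad : yd ∈ I.radical := by
    rw [← MvPolynomial.vanishingIdeal_zeroLocus_eq_radical (K := ℂ)]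
    rw [MvPolynomial.mem_vanishingIdeal_iff]
    intro z hz
    rw [MvPolynomial.mem_zeroLocus_iff] at hz
    have hf : ∀ j, eval z (f j) = 0 := fun j => hz (f j) (Ideal.subset_span ⟨j, rfl⟩)
    have h01 : ∀ i : Fin n, z (Sum.inl i) = 0 ∨ z (Sum.inl i) = 1 := by
      intro i
      obtain ⟨j, hj⟩ := hind i
      have := hf j
      rw [hj] at this
      simp only [map_sub, map_pow, eval_X] at this
      have : z (Sum.inl i) * (z (Sum.inl i) - 1) = 0 := by ring_nf; linear_combination this
      rcases mul_eq_zero.1 this with h | h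
      · exact Or.inl h
      · exact Or.inr (by linear_combination h)
    set J : Finset (Fin n) := Finset.univ.filter (fun i => z (Sum.inl i) = 1) with hJ
    have hInB : InB n p s f J := by
      refine ⟨z, hf, fun i => ?_⟩
      by_cases h : z (Sum.inl i) = 1
      · simp [hJ, h]
      · rcases h01 i with h0 | h1
        · simp [hJ, h0, h]
        · exact absurd h1 h
    have hnotsub : ¬ d ⊆ J := fun hsub => hd (hclosed.2 J hInB d hsub)
    obtain ⟨i, hi, hiJ⟩ := Finset.not_subset.1 hnotsub
    have hzi : z (Sum.inl i) = 0 := by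
      rcases h01 i with h0 | h1
      · exact h0
      · exact absurd (by simp [hJ, h1]) hiJ
    simp only [hyd, map_prod, eval_X, aeval_X]
    exact Finset.prod_eq_zero hi hzi
  -- Step 2: in the quotient, y_d is idempotent, so y_d^k ∈ I ⇒ y_d ∈ I
  obtain ⟨k, hk⟩ := hrad
  have hidem : (Ideal.Quotient.mk I yd) ^ 2 = Ideal.Quotient.mk I yd := by
    simp only [hyd, map_prod]
    rw [← Finset.prod_pow]
    refine Finset.prod_congr rfl fun i _ => ?_
    obtain ⟨j, hj⟩ := hind i
    have hmem : (X (Sum.inl i) : MvPolynomial (Fin n ⊕ Fin p) ℂ) ^ 2 - X (Sum.inl i) ∈ I := by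
      rw [← hj]; exact Ideal.subset_span ⟨j, rfl⟩
    rw [← map_pow, Ideal.Quotient.eq]
    exact hmem
  have hpow : ∀ m : ℕ, (Ideal.Quotient.mk I yd) ^ (m + 1) = Ideal.Quotient.mk I yd := by
    intro m
    induction m with
    | zero => simp
    | succ m ih => rw [pow_succ, ih, ← pow_two, hidem]
  rw [← Ideal.Quotient.eq_zero_iff_mem]
  rcases k with _ | m
  · have h1 : (1 : MvPolynomial (Fin n ⊕ Fin p) ℂ) ∈ I := by simpa using hk
    rw [Ideal.Quotient.eq_zero_iff_mem, (Ideal.eq_top_iff_one I).2 h1]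
    exact Submodule.mem_top
  · have := hpow m
    rw [← this, ← map_pow, Ideal.Quotient.eq_zero_iff_mem]
    exact hk
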